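/- For F = ℝ or ℂ and m ≤ n ≤ 2m, the m×n×2 tensor X = ((E_m, O); [[O, E_{⌊n/2⌋}],[O, O]]) has tensor rank exactly m + ⌊n/2⌋ over F. -/

import Mathlib

open Matrix BigOperators

/-- A pair of matrices `(A; B)` admits a simultaneous decomposition into `r`
rank-one tensors. -/
def pairDecomp {F : Type*} [Field F] {m n : Type*} [Fintype m] [Fintype n] (r : ℕ)
    (A B : Matrix m n F) : Prop :=
  ∃ (a : Fin r → m → F) (b : Fin r → n → F) (α β : Fin r → F),
    A = ∑ i, α i • Matrix.vecMulVec (a i) (b i) ∧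
    B = ∑ i, β i • Matrix.vecMulVec (a i) (b i)

/-- The tensor rank of the pair of matrices `(A; B)`. -/
noncomputable def pairRank {F : Type*} [Field F] {m n : Type*} [Fintype m] [Fintype n]
    (A B : Matrix m n F) : ℕ :=
  sInf {r | pairDecomp r A B}

/-- The pair `(A; B)` of rectangular matrices is diagonalizable. -/
def pairDiag {F : Type*} [Field F] {m n : ℕ} (A B : Matrix (Fin m) (Fin n) F) : Prop :=
  ∃ (P : (Matrix (Fin m) (Fin m) F)ˣ) (Q : (Matrix (Fin n) (Fin n) F)ˣ),
    (∀ (i : Fin m) (j : Fin n), (i : ℕ) ≠ (j : ℕ) → ((P : Matrix (Fin m) (Fin m) F) * A * (Q : Matrix (Fin n) (Fin n) F)) i j = 0) ∧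
    (∀ (i : Fin m) (j : Fin n), (i : ℕ) ≠ (j : ℕ) → ((P : Matrix (Fin m) (Fin m) F) * B * (Q : Matrix (Fin n) (Fin n) F)) i j = 0)

/-- The nilpotent Jordan block of size `k`. -/
def jordanNil {F : Type*} [Field F] (k : ℕ) : Matrix (Fin k) (Fin k) F :=
  Matrix.of fun i j => if (i : ℕ) + 1 = (j : ℕ) then 1 else 0

section Aux
open Module



lemma dim_count {F V W U : Type*} [Field F]
    [AddCommGroup V] [Module F V] [AddCommGroup W] [Module F W]
    [AddCommGroup U] [Module F U]
    [FiniteDimensional F V] [FiniteDimensional F W] [FiniteDimensional F U]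
    (P : W →ₗ[F] V) (ρ : W →ₗ[F] W) (X Y : U →ₗ[F] W)
    (hsurj : Function.Surjective P)
    (hX : ∀ c, P (X c) = 0) (hρX : ∀ c, ρ (X c) = 0)
    (hY : ∀ c, ∃ w, P w = 0 ∧ Y c = ρ w)
    (hinj : ∀ c, X c = 0 → Y c = 0 → c = 0) :
    finrank F V + finrank F U ≤ finrank F W := by
  classical
  set K := LinearMap.ker P with hK
  let ρK : K →ₗ[F] W := ρ.comp K.subtype
  have hXmem : ∀ c, X c ∈ K := fun c => LinearMap.mem_ker.mpr (hX c)
  let X' : U →ₗ[F] K := X.codRestrict K hXmem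
  have hX'ker : ∀ c, X' c ∈ LinearMap.ker ρK := by
    intro c
    apply LinearMap.mem_ker.mpr
    show ρ ((X' c : W)) = 0
    exact hρX c
  let X'' : U →ₗ[F] LinearMap.ker ρK := X'.codRestrict _ hX'ker
  have hYmem : ∀ c, Y c ∈ LinearMap.range ρK := by
    intro c
    obtain ⟨w, hw, hyw⟩ := hY c
    exact ⟨⟨w, LinearMap.mem_ker.mpr hw⟩, hyw.symm⟩
  let Y' : U →ₗ[F] LinearMap.range ρK := Y.codRestrict _ hYmem
  have e1 : finrank F (LinearMap.range X'') + finrank F (LinearMap.ker X'') = finrank F U :=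
    LinearMap.finrank_range_add_finrank_ker _
  have e2 : finrank F (LinearMap.range X'') ≤ finrank F (LinearMap.ker ρK) :=
    Submodule.finrank_le _
  let Y3 := Y'.domRestrict (LinearMap.ker X'')
  have hY3inj : Function.Injective Y3 := by
    rw [← LinearMap.ker_eq_bot]
    apply (Submodule.eq_bot_iff _).mpr
    rintro ⟨c, hc⟩ hc3
    have hc1 : X c = 0 := by
      have h0 : X'' c = 0 := LinearMap.mem_ker.mp hc
      have h1 : (X'' c : K) = 0 := congrArg Subtype.val h0
      exact congrArg Subtype.val h1
    have hc2 : Y c = 0 := by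
      have : Y' c = 0 := hc3
      exact congrArg Subtype.val this
    exact Subtype.ext (hinj c hc1 hc2)
  have e3 : finrank F (LinearMap.range Y3) = finrank F (LinearMap.ker X'') :=
    LinearMap.finrank_range_of_inj hY3inj
  have e4 : finrank F (LinearMap.range Y3) ≤ finrank F (LinearMap.range ρK) :=
    Submodule.finrank_le _
  have e5 : finrank F (LinearMap.range ρK) + finrank F (LinearMap.ker ρK) = finrank F K :=
    LinearMap.finrank_range_add_finrank_ker ρK
  have e6 : finrank F (LinearMap.range P) + finrank F K = finrank F W :=
    LinearMap.finrank_range_add_finrank_ker P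
  have e7 : finrank F (LinearMap.range P) = finrank F V := by
    rw [LinearMap.range_eq_top.mpr hsurj, finrank_top]
  omega


variable {F : Type*} [Field F]

lemma sum_smul_vecMulVec_mulVec {ι : Type*} [Fintype ι] {N M : ℕ}
    (c : ι → F) (a : ι → Fin M → F) (b : ι → Fin N → F) (v : Fin N → F) :
    (∑ i, c i • Matrix.vecMulVec (a i) (b i)) *ᵥ v = ∑ i, (c i * (b i ⬝ᵥ v)) • a i := by
  ext k
  simp only [Matrix.mulVec, dotProduct, Matrix.sum_apply, Matrix.smul_apply,
    Matrix.vecMulVec_apply, Finset.sum_apply, Pi.smul_apply, smul_eq_mul,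
    Finset.sum_mul, Finset.mul_sum]
  rw [Finset.sum_comm]
  apply Finset.sum_congr rfl
  intro i _
  apply Finset.sum_congr rfl
  intro j _
  ring

set_option maxHeartbeats 2000000 in
set_option synthInstance.maxHeartbeats 1000000 in
lemma square_key {ι : Type*} [Fintype ι] {n d : ℕ}
    (G Gi B C : Matrix (Fin n) (Fin n) F)
    (hGi : Gi * G = 1) (hGC : G * C = B) (hC2 : C * C = 0)
    (z : Fin d → Fin n → F)
    (hz : LinearIndependent F fun j => C *ᵥ (z j))
    (a : ι → Fin n → F) (b : ι → Fin n → F) (γ δ : ι → F)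
    (hG : G = ∑ i, γ i • Matrix.vecMulVec (a i) (b i))
    (hB : B = ∑ i, δ i • Matrix.vecMulVec (a i) (b i))
    (hγδ : ∀ i, δ i ≠ 0 → γ i ≠ 0) :
    n + d ≤ Fintype.card ι := by
  classical
  set D : ι → F := fun i => if γ i = 0 then 0 else δ i / γ i with hD
  have hδ0 : ∀ i, γ i = 0 → δ i = 0 := by
    intro i h
    by_contra hne
    exact (hγδ i hne) h
  have hDγ : ∀ i, D i * γ i = δ i := by
    intro i
    by_cases h : γ i = 0
    · simp [hD, h, hδ0 i h]
    · have : δ i / γ i * γ i = δ i := div_mul_cancel₀ _ h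
      simp [hD, h, this]
  -- linear maps
  let Q : (Fin n → F) →ₗ[F] (ι → F) :=
    { toFun := fun v i => b i ⬝ᵥ v
      map_add' := by intro u v; funext i; simp [dotProduct_add]
      map_smul' := by intro c v; funext i; simp [dotProduct_smul] }
  let P : (ι → F) →ₗ[F] (Fin n → F) :=
    { toFun := fun u => Gi *ᵥ (∑ i, (u i * γ i) • a i)
      map_add' := by
        intro u v
        have h : (∑ i, (((u + v) i) * γ i) • a i)
            = (∑ i, (u i * γ i) • a i) + (∑ i, (v i * γ i) • a i) := by
          rw [← Finset.sum_add_distrib]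
          apply Finset.sum_congr rfl
          intro i _
          simp [add_mul, add_smul]
        show Gi *ᵥ (∑ i, (((u + v) i) * γ i) • a i) = _
        rw [h, Matrix.mulVec_add]
      map_smul' := by
        intro c v
        have h : (∑ i, (((c • v) i) * γ i) • a i) = c • (∑ i, (v i * γ i) • a i) := by
          rw [Finset.smul_sum]
          apply Finset.sum_congr rfl
          intro i _
          simp only [Pi.smul_apply, smul_eq_mul, smul_smul, mul_assoc]
        show Gi *ᵥ (∑ i, (((c • v) i) * γ i) • a i)
            = c • (Gi *ᵥ (∑ i, (v i * γ i) • a i))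
        rw [h, Matrix.mulVec_smul] }
  let Dm : (ι → F) →ₗ[F] (ι → F) :=
    { toFun := fun u i => D i * u i
      map_add' := by intro u v; funext i; simp [mul_add]
      map_smul' := by intro c v; funext i; simp; ring }
  let ρ : (ι → F) →ₗ[F] (ι → F) :=
    { toFun := fun u i => if D i = 0 then u i else 0
      map_add' := by intro u v; funext i; by_cases h : D i = 0 <;> simp [h]
      map_smul' := by intro c v; funext i; by_cases h : D i = 0 <;> simp [h] }
  have hPQ : ∀ v, P (Q v) = v := by
    intro v
    show Gi *ᵥ (∑ i, ((b i ⬝ᵥ v) * γ i) • a i) = v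
    have : (∑ i, ((b i ⬝ᵥ v) * γ i) • a i) = G *ᵥ v := by
      rw [hG, sum_smul_vecMulVec_mulVec]
      apply Finset.sum_congr rfl
      intro i _
      rw [mul_comm]
    rw [this, Matrix.mulVec_mulVec, hGi, Matrix.one_mulVec]
  have hGiB : Gi * B = C := by
    rw [← hGC, ← Matrix.mul_assoc, hGi, Matrix.one_mul]
  have hPDQ : ∀ v, P (Dm (Q v)) = C *ᵥ v := by
    intro v
    show Gi *ᵥ (∑ i, ((D i * (b i ⬝ᵥ v)) * γ i) • a i) = C *ᵥ v
    have : (∑ i, ((D i * (b i ⬝ᵥ v)) * γ i) • a i) = B *ᵥ v := by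
      rw [hB, sum_smul_vecMulVec_mulVec]
      apply Finset.sum_congr rfl
      intro i _
      congr 1
      rw [mul_comm (D i) _, mul_assoc, hDγ i, mul_comm]
    rw [this, Matrix.mulVec_mulVec, hGiB]
  have hρDm : ∀ u, ρ (Dm u) = 0 := by
    intro u
    funext i
    by_cases h : D i = 0 <;> simp [ρ, Dm, h]
  -- the combination maps
  let zc : (Fin d → F) →ₗ[F] (Fin n → F) :=
    { toFun := fun c => ∑ j, c j • z j
      map_add' := by
        intro u v
        rw [← Finset.sum_add_distrib]
        apply Finset.sum_congr rfl
        intro j _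
        simp [add_smul]
      map_smul' := by
        intro c v
        simp only [RingHom.id_apply]
        rw [Finset.smul_sum]
        apply Finset.sum_congr rfl
        intro j _
        simp [smul_smul] }
  let Cm : (Fin n → F) →ₗ[F] (Fin n → F) := Matrix.mulVecLin C
  let Θ1 : (Fin d → F) →ₗ[F] (ι → F) := Dm ∘ₗ Q ∘ₗ Cm ∘ₗ zc
  let lm : (Fin d → F) →ₗ[F] (ι → F) := Dm ∘ₗ Q ∘ₗ zc - Q ∘ₗ Cm ∘ₗ zc
  let Θ2 : (Fin d → F) →ₗ[F] (ι → F) := ρ ∘ₗ lm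
  have hΘ1K : ∀ c, P (Θ1 c) = 0 := by
    intro c
    show P (Dm (Q (C *ᵥ zc c))) = 0
    rw [hPDQ, Matrix.mulVec_mulVec, hC2, Matrix.zero_mulVec]
  have hlmK : ∀ c, P (lm c) = 0 := by
    intro c
    show P (Dm (Q (zc c)) - Q (C *ᵥ zc c)) = 0
    rw [map_sub, hPDQ, hPQ, sub_self]
  have hρΘ1 : ∀ c, ρ (Θ1 c) = 0 := fun c => hρDm _
  -- injectivity
  have hinj : ∀ c, Θ1 c = 0 → Θ2 c = 0 → c = 0 := by
    intro c h1 h2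
    have hQy : Q (C *ᵥ zc c) = 0 := by
      funext i
      by_cases h : D i = 0
      · have := congrFun h2 i
        simp only [Θ2, ρ, lm, LinearMap.comp_apply, LinearMap.sub_apply, LinearMap.coe_mk,
          AddHom.coe_mk, Pi.zero_apply] at this
        rw [if_pos h] at this
        have : D i * (Q (zc c)) i - (Q (C *ᵥ zc c)) i = 0 := by
          simpa [Dm, Cm, Matrix.mulVecLin_apply, Pi.sub_apply] using this
        rw [h, zero_mul, zero_sub, neg_eq_zero] at this
        exact this
      · have := congrFun h1 i
        simp only [Θ1, Dm, LinearMap.comp_apply, LinearMap.coe_mk, AddHom.coe_mk,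
          Pi.zero_apply] at this
        rcases mul_eq_zero.mp this with h' | h'
        · exact absurd h' h
        · exact h'
    have hy : (C *ᵥ zc c) = 0 := by
      have := hPQ (C *ᵥ zc c)
      rw [hQy, map_zero] at this
      exact this.symm
    have hy2 : ∑ j, c j • (C *ᵥ z j) = 0 := by
      rw [← hy]
      show ∑ j, c j • (C *ᵥ z j) = C *ᵥ (∑ j, c j • z j)
      have h2 : C *ᵥ (∑ j, c j • z j) = ∑ j, C *ᵥ (c j • z j) :=
        map_sum (Matrix.mulVecLin C) _ _
      rw [h2]
      apply Finset.sum_congr rfl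
      intro j _
      rw [Matrix.mulVec_smul]
    funext j
    exact Fintype.linearIndependent_iff.mp hz c hy2 j
  have key := dim_count (F := F) P ρ Θ1 Θ2
    (fun v => ⟨Q v, hPQ v⟩) hΘ1K hρΘ1
    (fun c => ⟨lm c, hlmK c, rfl⟩) hinj
  rwa [Module.finrank_fin_fun, Module.finrank_fin_fun, Module.finrank_pi] at key

lemma upper {F : Type*} [Field F] {m n : ℕ} (hm : m ≤ n) (hn : n ≤ 2*m) :
    pairDecomp (m + n/2)
      (Matrix.of fun (i : Fin m) (j : Fin n) => if (i : ℕ) = (j : ℕ) then (1 : F) else 0)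
      (Matrix.of fun (i : Fin m) (j : Fin n) =>
        if (i : ℕ) < n / 2 ∧ (j : ℕ) = (i : ℕ) + (n - n / 2) then (1 : F) else 0) := by
  classical
  let e := finSumFinEquiv (m := m) (n := n/2)
  let aS : Fin m ⊕ Fin (n/2) → Fin m → F :=
    Sum.elim (fun k => Pi.single k 1)
      (fun p => Pi.single (⟨(p : ℕ), by have := p.2; omega⟩ : Fin m) 1)
  let bS : Fin m ⊕ Fin (n/2) → Fin n → F :=
    Sum.elim (fun k => Pi.single (⟨(k : ℕ), by have := k.2; omega⟩ : Fin n) 1)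
      (fun p => Pi.single (⟨(p : ℕ) + (n - n/2), by have := p.2; omega⟩ : Fin n) 1)
  let αS : Fin m ⊕ Fin (n/2) → F := Sum.elim (fun _ => 1) (fun _ => 0)
  let βS : Fin m ⊕ Fin (n/2) → F := Sum.elim (fun _ => 0) (fun _ => 1)
  refine ⟨aS ∘ e.symm, bS ∘ e.symm, αS ∘ e.symm, βS ∘ e.symm, ?_, ?_⟩
  · have hs : (∑ i : Fin (m + n/2),
        (αS ∘ e.symm) i • Matrix.vecMulVec ((aS ∘ e.symm) i) ((bS ∘ e.symm) i))
        = ∑ s : Fin m ⊕ Fin (n/2), αS s • Matrix.vecMulVec (aS s) (bS s) :=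
      Equiv.sum_comp e.symm (fun s => αS s • Matrix.vecMulVec (aS s) (bS s))
    rw [hs, Fintype.sum_sum_type]
    ext i j
    simp only [Matrix.add_apply, Matrix.sum_apply, Matrix.smul_apply, Matrix.vecMulVec_apply,
      Sum.elim_inl, Sum.elim_inr, smul_eq_mul, zero_mul, one_mul, zero_smul, one_smul,
      Matrix.zero_apply, Pi.zero_apply, Finset.sum_const_zero, add_zero, Matrix.of_apply,
      aS, bS, αS, βS]
    rw [Finset.sum_eq_single i]
    · simp only [Pi.single_apply, Fin.ext_iff]
      split_ifs <;> simp_all <;> omega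
    · intro k _ hk
      simp only [Pi.single_apply]
      rw [if_neg (fun hc => hk hc.symm), zero_mul]
    · intro h
      exact absurd (Finset.mem_univ i) h
  · have hs : (∑ i : Fin (m + n/2),
        (βS ∘ e.symm) i • Matrix.vecMulVec ((aS ∘ e.symm) i) ((bS ∘ e.symm) i))
        = ∑ s : Fin m ⊕ Fin (n/2), βS s • Matrix.vecMulVec (aS s) (bS s) :=
      Equiv.sum_comp e.symm (fun s => βS s • Matrix.vecMulVec (aS s) (bS s))
    rw [hs, Fintype.sum_sum_type]
    ext i j
    simp only [Matrix.add_apply, Matrix.sum_apply, Matrix.smul_apply, Matrix.vecMulVec_apply,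
      Sum.elim_inl, Sum.elim_inr, smul_eq_mul, zero_mul, one_mul, zero_smul, one_smul,
      Matrix.zero_apply, Pi.zero_apply, Finset.sum_const_zero, zero_add, Matrix.of_apply,
      aS, bS, αS, βS]
    by_cases hi : (i : ℕ) < n/2
    · rw [Finset.sum_eq_single (⟨(i : ℕ), hi⟩ : Fin (n/2))]
      · simp only [Pi.single_apply, Fin.ext_iff]
        split_ifs <;> simp_all <;> omega
      · intro p _ hp
        simp only [Pi.single_apply]
        rw [if_neg (fun hc => hp (Fin.val_injective
          (show (p : ℕ) = _ by simpa using (Fin.ext_iff.mp hc).symm))), zero_mul]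
      · intro h
        exact absurd (Finset.mem_univ _) h
    · rw [if_neg (fun hc => hi hc.1)]
      apply (Finset.sum_eq_zero _).symm
      intro p _
      simp only [Pi.single_apply]
      rw [if_neg (fun hc => hi (by
        rw [Fin.ext_iff] at hc
        simp only [] at hc
        have := p.2
        omega)), zero_mul]

set_option maxHeartbeats 1000000 in
lemma lower {F : Type*} [Field F] [Infinite F] {m n : ℕ} (hm : m ≤ n) (hn : n ≤ 2*m)
    {r : ℕ}
    (hdec : pairDecomp r
      (Matrix.of fun (i : Fin m) (j : Fin n) => if (i : ℕ) = (j : ℕ) then (1 : F) else 0)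
      (Matrix.of fun (i : Fin m) (j : Fin n) =>
        if (i : ℕ) < n / 2 ∧ (j : ℕ) = (i : ℕ) + (n - n / 2) then (1 : F) else 0)) :
    m + n / 2 ≤ r := by
  classical
  obtain ⟨a, b, α, β, hA, hB⟩ := hdec
  obtain ⟨x, hx⟩ : ∃ x : F, ∀ i, β i ≠ 0 → α i + x * β i ≠ 0 := by
    obtain ⟨x, hx⟩ := Infinite.exists_notMem_finset
      (Finset.image (fun i => -(α i / β i)) Finset.univ)
    refine ⟨x, fun i hβ hcon => hx ?_⟩
    apply Finset.mem_image.mpr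
    refine ⟨i, Finset.mem_univ i, ?_⟩
    field_simp
    linear_combination -hcon
  -- the square extension
  set E : Matrix (Fin n) (Fin n) F := Matrix.of fun i j =>
    if (i : ℕ) < n / 2 ∧ (j : ℕ) = (i : ℕ) + (n - n / 2) then (1 : F) else 0 with hEdef
  have hE2 : E * E = 0 := by
    ext i j
    simp only [Matrix.mul_apply, Matrix.zero_apply, hEdef, Matrix.of_apply]
    apply Finset.sum_eq_zero
    intro k _
    by_cases hc : (i : ℕ) < n / 2 ∧ (k : ℕ) = (i : ℕ) + (n - n / 2)
    · rw [if_pos hc, if_neg, mul_zero]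
      intro h2
      omega
    · rw [if_neg hc, zero_mul]
  have hGi : ((1 : Matrix (Fin n) (Fin n) F) - x • E) * (1 + x • E) = 1 := by
    rw [Matrix.sub_mul, Matrix.one_mul, Matrix.smul_mul, Matrix.mul_add, Matrix.mul_one,
      Matrix.mul_smul, hE2, smul_zero, add_zero, add_sub_cancel_right]
  have hGC : ((1 : Matrix (Fin n) (Fin n) F) + x • E) * E = E := by
    rw [Matrix.add_mul, Matrix.one_mul, Matrix.smul_mul, hE2, smul_zero, add_zero]
  -- z vectors
  have hd_le : n / 2 ≤ m := by omega
  have hh_le : n - n / 2 ≤ m := by omega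
  let z : Fin (n / 2) → Fin n → F :=
    fun j => Pi.single (⟨n - n / 2 + (j : ℕ), by have := j.2; omega⟩ : Fin n) 1
  have hEz : ∀ j : Fin (n / 2),
      E *ᵥ z j = Pi.single (⟨(j : ℕ), by have := j.2; omega⟩ : Fin n) (1 : F) := by
    intro j
    funext i
    simp only [Matrix.mulVec, dotProduct, hEdef, Matrix.of_apply, z, Pi.single_apply]
    rw [Finset.sum_eq_single (⟨n - n / 2 + (j : ℕ), by have := j.2; omega⟩ : Fin n)]
    · rw [if_pos rfl, mul_one]
      have hj2 := j.2
      refine (if_congr ?_ rfl rfl)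
      rw [Fin.ext_iff]
      show ((i : ℕ) < n / 2 ∧ n - n / 2 + (j : ℕ) = (i : ℕ) + (n - n / 2))
          ↔ (i : ℕ) = (j : ℕ)
      omega
    · intro k _ hk
      rw [if_neg (fun hc => hk hc), mul_zero]
    · intro h
      exact absurd (Finset.mem_univ _) h
  have hz : LinearIndependent F fun j => E *ᵥ z j := by
    have hfun : (fun j => E *ᵥ z j)
        = (⇑(Pi.basisFun F (Fin n)) ∘ fun j : Fin (n / 2) =>
            (⟨(j : ℕ), by have := j.2; omega⟩ : Fin n)) := by
      funext j
      rw [hEz j, Function.comp_apply, Pi.basisFun_apply]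
    rw [hfun]
    apply (Pi.basisFun F (Fin n)).linearIndependent.comp
    intro p q hpq
    rw [Fin.ext_iff] at hpq ⊢
    simpa using hpq
  -- entrywise decompositions of A and B
  have hAe : ∀ (p : Fin m) (q : Fin n),
      (if (p : ℕ) = (q : ℕ) then (1 : F) else 0) = ∑ k, α k * (a k p * b k q) := by
    intro p q
    have h := congrFun (congrFun hA p) q
    simpa [Matrix.sum_apply, Matrix.vecMulVec_apply] using h
  have hBe : ∀ (p : Fin m) (q : Fin n),
      (if (p : ℕ) < n / 2 ∧ (q : ℕ) = (p : ℕ) + (n - n / 2) then (1 : F) else 0)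
        = ∑ k, β k * (a k p * b k q) := by
    intro p q
    have h := congrFun (congrFun hB p) q
    simpa [Matrix.sum_apply, Matrix.vecMulVec_apply] using h
  -- the extended decomposition
  let aE : (Fin r ⊕ Fin (n - m)) → Fin n → F :=
    Sum.elim
      (fun k => fun q => if hq : (q : ℕ) < m then a k ⟨(q : ℕ), hq⟩ else 0)
      (fun p => Pi.single (⟨m + (p : ℕ), by have := p.2; omega⟩ : Fin n) 1)
  let bE : (Fin r ⊕ Fin (n - m)) → Fin n → F :=
    Sum.elim (fun k => b k)
      (fun p => Pi.single (⟨m + (p : ℕ), by have := p.2; omega⟩ : Fin n) 1)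
  let γ : (Fin r ⊕ Fin (n - m)) → F := Sum.elim (fun k => α k + x * β k) (fun _ => 1)
  let δ : (Fin r ⊕ Fin (n - m)) → F := Sum.elim (fun k => β k) (fun _ => 0)
  have hEent : ∀ (i j : Fin n),
      E i j = if (i : ℕ) < n / 2 ∧ (j : ℕ) = (i : ℕ) + (n - n / 2) then (1 : F) else 0 :=
    fun i j => rfl
  have hGsum : (1 : Matrix (Fin n) (Fin n) F) + x • E
      = ∑ i, γ i • Matrix.vecMulVec (aE i) (bE i) := by
    rw [Fintype.sum_sum_type]
    ext i j
    simp only [Matrix.add_apply, Matrix.sum_apply, Matrix.smul_apply, Matrix.vecMulVec_apply,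
      smul_eq_mul, Matrix.one_apply, Sum.elim_inl, Sum.elim_inr, γ, aE, bE]
    by_cases hi : (i : ℕ) < m
    · have hal : ∀ k : Fin r,
          (if hq : (i : ℕ) < m then a k ⟨(i : ℕ), hq⟩ else 0) = a k ⟨(i : ℕ), hi⟩ :=
        fun k => dif_pos hi
      have hinr : ∀ p : Fin (n - m),
          (Pi.single (⟨m + (p : ℕ), by have := p.2; omega⟩ : Fin n) (1 : F) : Fin n → F) i
            = (0 : F) := by
        intro p
        rw [Pi.single_apply, if_neg]
        intro hc
        have hc' : (i : ℕ) = m + (p : ℕ) := Fin.ext_iff.mp hc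
        omega
      simp only [hal, hinr, zero_mul, mul_zero, Finset.sum_const_zero, add_zero]
      have hsplit : ∑ k : Fin r, (α k + x * β k) * (a k ⟨(i : ℕ), hi⟩ * b k j)
          = (∑ k, α k * (a k ⟨(i : ℕ), hi⟩ * b k j))
            + x * ∑ k, β k * (a k ⟨(i : ℕ), hi⟩ * b k j) := by
        rw [Finset.mul_sum, ← Finset.sum_add_distrib]
        apply Finset.sum_congr rfl
        intro k _
        ring
      rw [hsplit, ← hAe ⟨(i : ℕ), hi⟩ j, ← hBe ⟨(i : ℕ), hi⟩ j, hEent]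
      congr 1
      exact if_congr Fin.ext_iff rfl rfl
    · have hal : ∀ k : Fin r,
          (if hq : (i : ℕ) < m then a k ⟨(i : ℕ), hq⟩ else 0) = 0 :=
        fun k => dif_neg hi
      simp only [hal, zero_mul, mul_zero, Finset.sum_const_zero, zero_add, one_mul]
      have hE0 : E i j = 0 := by
        rw [hEent, if_neg]
        intro hc
        omega
      rw [hE0, mul_zero, add_zero]
      have him : (i : ℕ) - m < n - m := by
        have := i.2
        omega
      rw [Finset.sum_eq_single (⟨(i : ℕ) - m, him⟩ : Fin (n - m))]
      · have h1 : i = (⟨m + ((⟨(i : ℕ) - m, him⟩ : Fin (n - m)) : ℕ), by omega⟩ : Fin n) :=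
          Fin.ext (show (i : ℕ) = m + ((i : ℕ) - m) by omega)
        rw [Pi.single_apply, Pi.single_apply, if_pos h1, one_mul]
        refine if_congr ?_ rfl rfl
        simp only [Fin.ext_iff]
        show (i : ℕ) = (j : ℕ) ↔ (j : ℕ) = m + ((i : ℕ) - m)
        omega
      · intro p _ hp
        rw [Pi.single_apply, if_neg, zero_mul]
        intro hc
        have hc' : (i : ℕ) = m + (p : ℕ) := Fin.ext_iff.mp hc
        apply hp
        apply Fin.ext
        show (p : ℕ) = (i : ℕ) - m
        omega
      · intro h
        exact absurd (Finset.mem_univ _) h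
  have hEsum : E = ∑ i, δ i • Matrix.vecMulVec (aE i) (bE i) := by
    rw [Fintype.sum_sum_type]
    have hz2 : (∑ p : Fin (n - m),
        δ (Sum.inr p) • Matrix.vecMulVec (aE (Sum.inr p)) (bE (Sum.inr p))) = 0 := by
      apply Finset.sum_eq_zero
      intro p _
      show (0 : F) • Matrix.vecMulVec (aE (Sum.inr p)) (bE (Sum.inr p)) = 0
      rw [zero_smul]
    rw [hz2, add_zero]
    ext i j
    simp only [Matrix.sum_apply, Matrix.smul_apply, Matrix.vecMulVec_apply, smul_eq_mul,
      Sum.elim_inl, δ, aE, bE]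
    by_cases hi : (i : ℕ) < m
    · have hal : ∀ k : Fin r,
          (if hq : (i : ℕ) < m then a k ⟨(i : ℕ), hq⟩ else 0) = a k ⟨(i : ℕ), hi⟩ :=
        fun k => dif_pos hi
      simp only [hal]
      rw [hEent, ← hBe ⟨(i : ℕ), hi⟩ j]
    · have hal : ∀ k : Fin r,
          (if hq : (i : ℕ) < m then a k ⟨(i : ℕ), hq⟩ else 0) = 0 :=
        fun k => dif_neg hi
      simp only [hal, zero_mul, mul_zero, Finset.sum_const_zero]
      rw [hEent, if_neg]
      intro hc
      omega
  have hγδ : ∀ i, δ i ≠ 0 → γ i ≠ 0 := by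
    rintro (k | p) h
    · exact hx k h
    · exact absurd rfl h
  have key := square_key ((1 : Matrix (Fin n) (Fin n) F) + x • E)
    ((1 : Matrix (Fin n) (Fin n) F) - x • E) E E hGi hGC hE2 z hz aE bE γ δ hGsum hEsum hγδ
  rw [Fintype.card_sum, Fintype.card_fin, Fintype.card_fin] at key
  omega

end Aux

/-- The `m×n×2` tensor `((E_m, O); [[O, E_{⌊n/2⌋}], [O, O]])` has rank `m + ⌊n/2⌋`. -/
theorem pairRank_example_max {F : Type*} [RCLike F] {m n : ℕ} (hm : m ≤ n) (hn : n ≤ 2 * m) :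
    pairRank
      (Matrix.of fun (i : Fin m) (j : Fin n) => if (i : ℕ) = (j : ℕ) then (1 : F) else 0)
      (Matrix.of fun (i : Fin m) (j : Fin n) =>
        if (i : ℕ) < n / 2 ∧ (j : ℕ) = (i : ℕ) + (n - n / 2) then (1 : F) else 0) =
      m + n / 2 := by
  have hub := upper (F := F) hm hn
  have hne : {r | pairDecomp r
      (Matrix.of fun (i : Fin m) (j : Fin n) => if (i : ℕ) = (j : ℕ) then (1 : F) else 0)
      (Matrix.of fun (i : Fin m) (j : Fin n) =>
        if (i : ℕ) < n / 2 ∧ (j : ℕ) = (i : ℕ) + (n - n / 2) then (1 : F) else 0)}.Nonempty :=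
    ⟨m + n / 2, hub⟩
  refine le_antisymm (Nat.sInf_le hub) ?_
  exact lower hm hn (Nat.sInf_mem hne)
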